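/- Let (A, α) and (B, β) be unital Z₂-graded C*-algebras, ω a state on A and φ a state on B. The product functional ω × φ on the algebraic Fermi tensor product A ⊛₀ B, defined on elementary tensors by (ω × φ)(a ⊛ b) = ω(a)φ(b), is positive if and only if at least one of ω, φ is even. -/

import Mathlib

open scoped ComplexOrder TensorProduct

/-- A state on a unital complex *-algebra, written as a plain function. -/
def IsStateOn {R : Type*} [Ring R] [Algebra ℂ R] [StarRing R] (f : R → ℂ) : Prop :=
  (∀ x y, f (x + y) = f x + f y) ∧ (∀ (c : ℂ) (x), f (c • x) = c * f x) ∧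
    f 1 = 1 ∧ ∀ x, 0 ≤ f (star x * x)

section Aux

variable {R : Type*} [Ring R] [Algebra ℂ R] [StarRing R] [StarModule ℂ R]

lemma IsStateOn.im_zero {f : R → ℂ} (hf : IsStateOn f) (x : R) :
    (f (star x * x)).im = 0 := by
  have := hf.2.2.2 x
  rw [Complex.le_def] at this
  exact this.2.symm

lemma IsStateOn.conj_eq {f : R → ℂ} (hf : IsStateOn f) (x y : R) :
    f (star y * x) = (starRingEnd ℂ) (f (star x * y)) := by
  set u := f (star x * y) with hu
  set v := f (star y * x) with hv
  have expand : ∀ z w : R, star (z + w) * (z + w)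
      = star z * z + (star z * w + (star w * z + star w * w)) := by
    intro z w
    rw [star_add]
    noncomm_ring
  have h1 : (u + v).im = 0 := by
    have h := hf.im_zero (x + y)
    rw [expand, hf.1, hf.1, hf.1] at h
    have hx := hf.im_zero x
    have hy := hf.im_zero y
    simp only [Complex.add_im, hx, hy, ← hu, ← hv] at h
    rw [Complex.add_im]
    linarith
  have h2 : (Complex.I * u - Complex.I * v).im = 0 := by
    have h := hf.im_zero (x + Complex.I • y)
    rw [expand, hf.1, hf.1, hf.1] at h
    have e1 : star x * (Complex.I • y) = Complex.I • (star x * y) := mul_smul_comm _ _ _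
    have e2 : star (Complex.I • y) * x = (-Complex.I) • (star y * x) := by
      rw [star_smul, Complex.star_def, Complex.conj_I, smul_mul_assoc]
    have e3 : star (Complex.I • y) * (Complex.I • y) = star y * y := by
      rw [star_smul, Complex.star_def, Complex.conj_I, smul_mul_assoc, mul_smul_comm,
        smul_smul]
      simp
    rw [e1, e2, e3, hf.2.1, hf.2.1] at h
    have hx := hf.im_zero x
    have hy := hf.im_zero y
    simp only [Complex.add_im, hx, hy, ← hu, ← hv, neg_mul] at h
    rw [Complex.sub_im]
    simp only [Complex.neg_im] at h ⊢
    linarith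
  have hre : u.re = v.re := by
    have := h2
    simp only [Complex.sub_im, Complex.mul_im, Complex.I_re, Complex.I_im] at this
    simp only [zero_mul, one_mul, zero_add] at this
    linarith
  have him : u.im = -v.im := by
    simp only [Complex.add_im] at h1; linarith
  apply Complex.ext <;> simp [Complex.conj_re, Complex.conj_im, hre, him]

lemma IsStateOn.star_eq {f : R → ℂ} (hf : IsStateOn f) (x : R) :
    f (star x) = (starRingEnd ℂ) (f x) := by
  have := hf.conj_eq (x := x) (y := 1)
  rw [star_one, one_mul, mul_one] at this
  rw [this, Complex.conj_conj]

lemma IsStateOn.zero {f : R → ℂ} (hf : IsStateOn f) : f 0 = 0 := by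
  have := hf.2.1 0 0
  simpa using this

/-- A state packaged as a linear map. -/
def IsStateOn.lm {f : R → ℂ} (hf : IsStateOn f) : R →ₗ[ℂ] ℂ where
  toFun := f
  map_add' := hf.1
  map_smul' := fun c x => by simpa using hf.2.1 c x

@[simp] lemma IsStateOn.lm_apply {f : R → ℂ} (hf : IsStateOn f) (x : R) : hf.lm x = f x := rfl

end Aux


section Gram

variable {A : Type*} [Ring A] [Algebra ℂ A] [StarRing A] [StarModule ℂ A]
variable {B : Type*} [Ring B] [Algebra ℂ B] [StarRing B] [StarModule ℂ B]

lemma IsStateOn.quad_expand {f : A → ℂ} (hf : IsStateOn f) {ι : Type*} [Fintype ι]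
    (x : ι → ℂ) (c : ι → A) :
    f (star (∑ j, x j • c j) * (∑ j, x j • c j))
      = ∑ i, ∑ j, (starRingEnd ℂ) (x i) * x j * f (star (c i) * c j) := by
  have hstar : star (∑ j, x j • c j) = ∑ i, (starRingEnd ℂ) (x i) • star (c i) := by
    rw [star_sum]
    exact Finset.sum_congr rfl fun i _ => by rw [star_smul, Complex.star_def]
  rw [hstar, Finset.sum_mul_sum]
  have hterm : ∀ i j, ((starRingEnd ℂ) (x i) • star (c i)) * (x j • c j)
      = ((starRingEnd ℂ) (x i) * x j) • (star (c i) * c j) :=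
    fun i j => smul_mul_smul_comm _ _ _ _
  simp_rw [hterm]
  simp only [← hf.lm_apply, map_sum, LinearMap.map_smul, smul_eq_mul]

lemma gram_nonneg {ω : A → ℂ} (hω : IsStateOn ω) {φ : B → ℂ} (hφ : IsStateOn φ)
    {ι : Type*} [Fintype ι] (c : ι → A) (d : ι → B) :
    0 ≤ ∑ i, ∑ j, ω (star (c i) * c j) * φ (star (d i) * d j) := by
  classical
  set N : Matrix ι ι ℂ := Matrix.of fun i j => φ (star (d i) * d j) with hNdef
  have hN : ∀ i j, N i j = φ (star (d i) * d j) := fun i j => rfl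
  have hherm : N.IsHermitian := by
    rw [Matrix.IsHermitian]
    ext i j
    rw [Matrix.conjTranspose_apply, hN, hN, Complex.star_def]
    exact (hφ.conj_eq (d j) (d i)).symm
  have hpsd : N.PosSemidef := by
    refine Matrix.posSemidef_iff_dotProduct_mulVec.mpr ⟨hherm, fun x => ?_⟩
    have hx : dotProduct (star x) (N.mulVec x)
        = ∑ i, ∑ j, (starRingEnd ℂ) (x i) * x j * N i j := by
      simp only [dotProduct, Matrix.mulVec, Pi.star_apply, Finset.mul_sum,
        Complex.star_def]
      exact Finset.sum_congr rfl fun i _ => Finset.sum_congr rfl fun j _ => by ring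
    rw [hx]
    simp only [hN]
    rw [← hφ.quad_expand x d]
    exact hφ.2.2.2 _
  obtain ⟨U, hU⟩ : ∃ U : Matrix ι ι ℂ, N = star U * U := by
    open scoped MatrixOrder in
    exact CStarAlgebra.nonneg_iff_eq_star_mul_self.mp hpsd.nonneg
  have hNU : ∀ i j, N i j = ∑ k, (starRingEnd ℂ) (U k i) * U k j := by
    intro i j
    rw [hU]
    simp [Matrix.mul_apply, Matrix.conjTranspose_apply, Complex.star_def]
  have key : ∀ k, ω (star (∑ j, U k j • c j) * (∑ j, U k j • c j))
      = ∑ i, ∑ j, (starRingEnd ℂ) (U k i) * U k j * ω (star (c i) * c j) :=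
    fun k => hω.quad_expand _ _
  have calc1 : ∑ k, ω (star (∑ j, U k j • c j) * (∑ j, U k j • c j))
      = ∑ i, ∑ j, ω (star (c i) * c j) * φ (star (d i) * d j) := by
    simp_rw [key]
    rw [Finset.sum_comm]
    refine Finset.sum_congr rfl fun i _ => ?_
    rw [Finset.sum_comm]
    refine Finset.sum_congr rfl fun j _ => ?_
    have hφN : φ (star (d i) * d j) = ∑ k, (starRingEnd ℂ) (U k i) * U k j := by
      rw [← hN, hNU]
    rw [hφN, Finset.mul_sum]
    exact Finset.sum_congr rfl fun k _ => by ring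
  rw [← calc1]
  exact Finset.sum_nonneg fun k _ => hω.2.2.2 _

end Gram

section Rep

variable {A : Type*} [Ring A] [Algebra ℂ A] [StarRing A]
variable {B : Type*} [Ring B] [Algebra ℂ B] [StarRing B]

lemma exists_hom_rep (α : A ≃⋆ₐ[ℂ] A) (hα : ∀ a, α (α a) = a)
    (β : B ≃⋆ₐ[ℂ] B) (hβ : ∀ b, β (β b) = b) (t : A ⊗[ℂ] B) :
    ∃ (n : ℕ) (a : Fin n → A) (b : Fin n → B),
      (∀ i, α (a i) = a i ∨ α (a i) = -(a i)) ∧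
      (∀ i, β (b i) = b i ∨ β (b i) = -(b i)) ∧
      t = ∑ i, a i ⊗ₜ[ℂ] b i := by
  induction t with
  | zero =>
      exact ⟨0, ![], ![], fun i => i.elim0, fun i => i.elim0, by simp⟩
  | tmul x y =>
      set x₀ := (2⁻¹ : ℂ) • (x + α x) with hx₀
      set x₁ := (2⁻¹ : ℂ) • (x - α x) with hx₁
      set y₀ := (2⁻¹ : ℂ) • (y + β y) with hy₀
      set y₁ := (2⁻¹ : ℂ) • (y - β y) with hy₁
      have hαx₀ : α x₀ = x₀ := by
        rw [hx₀, map_smul, map_add, hα, add_comm]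
      have hαx₁ : α x₁ = -x₁ := by
        rw [hx₁, map_smul, map_sub, hα, ← smul_neg, neg_sub]
      have hβy₀ : β y₀ = y₀ := by
        rw [hy₀, map_smul, map_add, hβ, add_comm]
      have hβy₁ : β y₁ = -y₁ := by
        rw [hy₁, map_smul, map_sub, hβ, ← smul_neg, neg_sub]
      have hxs : x₀ + x₁ = x := by
        rw [hx₀, hx₁, ← smul_add]
        have : x + α x + (x - α x) = (2 : ℂ) • x := by
          rw [two_smul]; abel
        rw [this, smul_smul]
        norm_num
      have hys : y₀ + y₁ = y := by
        rw [hy₀, hy₁, ← smul_add]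
        have : y + β y + (y - β y) = (2 : ℂ) • y := by
          rw [two_smul]; abel
        rw [this, smul_smul]
        norm_num
      refine ⟨4, ![x₀, x₀, x₁, x₁], ![y₀, y₁, y₀, y₁], ?_, ?_, ?_⟩
      · intro i
        fin_cases i <;> simp [hαx₀, hαx₁]
      · intro i
        fin_cases i <;> simp [hβy₀, hβy₁]
      · rw [Fin.sum_univ_four, ← hxs, ← hys]
        simp only [Matrix.cons_val_zero, Matrix.cons_val_one, Matrix.head_cons,
          Matrix.cons_val_two, Matrix.tail_cons, Matrix.cons_val_three,
          TensorProduct.add_tmul, TensorProduct.tmul_add]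
        abel
  | add s t hs ht =>
      obtain ⟨n, a, b, ha, hb, hst⟩ := hs
      obtain ⟨m, a', b', ha', hb', hst'⟩ := ht
      refine ⟨n + m, Fin.append a a', Fin.append b b', ?_, ?_, ?_⟩
      · intro i
        refine Fin.addCases (fun j => ?_) (fun j => ?_) i
        · simpa [Fin.append_left] using ha j
        · simpa [Fin.append_right] using ha' j
      · intro i
        refine Fin.addCases (fun j => ?_) (fun j => ?_) i
        · simpa [Fin.append_left] using hb j
        · simpa [Fin.append_right] using hb' j
      · rw [Fin.sum_univ_add]
        simp only [Fin.append_left, Fin.append_right]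
        rw [hst, hst']

end Rep

/-- Let `(A, α)` and `(B, β)` be unital Z₂-graded C*-algebras, `ω` a state on
`A` and `φ` a state on `B`.  Let `C` be the algebraic Fermi tensor product `A ⊛₀ B`: its
underlying ℂ-module is the algebraic tensor product (the linear equivalence `e`), with
multiplication and involution twisted by the Klein sign `ε` on homogeneous elements.
Then the product functional `F`, determined by `F(a ⊛ b) = ω(a)φ(b)`, is positive if and
only if at least one of `ω`, `φ` is even. -/
theorem deFinetti_stmt7
    (A : Type) [CStarAlgebra A] (α : A ≃⋆ₐ[ℂ] A) (hα : ∀ a, α (α a) = a)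
    (B : Type) [CStarAlgebra B] (β : B ≃⋆ₐ[ℂ] B) (hβ : ∀ b, β (β b) = b)
    (C : Type) [Ring C] [StarRing C] [Algebra ℂ C]
    (e : (A ⊗[ℂ] B) ≃ₗ[ℂ] C)
    (hone : e ((1 : A) ⊗ₜ[ℂ] (1 : B)) = 1)
    -- Fermi multiplication rule: ε(b, a') = 1 when `b` or `a'` is even
    (hmul₁ : ∀ (a a' : A) (b b' : B), (β b = b ∨ α a' = a') →
      e (a ⊗ₜ[ℂ] b) * e (a' ⊗ₜ[ℂ] b') = e ((a * a') ⊗ₜ[ℂ] (b * b')))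
    -- Fermi multiplication rule: ε(b, a') = -1 when both `b` and `a'` are odd
    (hmul₂ : ∀ (a a' : A) (b b' : B), β b = -b → α a' = -a' →
      e (a ⊗ₜ[ℂ] b) * e (a' ⊗ₜ[ℂ] b') = -e ((a * a') ⊗ₜ[ℂ] (b * b')))
    -- Fermi involution: ε(a, b) = 1 when `a` or `b` is even
    (hstar₁ : ∀ (a : A) (b : B), (α a = a ∨ β b = b) →
      star (e (a ⊗ₜ[ℂ] b)) = e ((star a) ⊗ₜ[ℂ] (star b)))
    -- Fermi involution: ε(a, b) = -1 when both `a` and `b` are odd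
    (hstar₂ : ∀ (a : A) (b : B), α a = -a → β b = -b →
      star (e (a ⊗ₜ[ℂ] b)) = -e ((star a) ⊗ₜ[ℂ] (star b)))
    (ω : A → ℂ) (hω : IsStateOn ω)
    (φ : B → ℂ) (hφ : IsStateOn φ)
    (F : C → ℂ)
    (hFadd : ∀ x y, F (x + y) = F x + F y)
    (hFsmul : ∀ (c : ℂ) (x), F (c • x) = c * F x)
    (hF : ∀ a b, F (e (a ⊗ₜ[ℂ] b)) = ω a * φ b) :
    (∀ x : C, 0 ≤ F (star x * x)) ↔
      ((∀ a, ω (α a) = ω a) ∨ (∀ b, φ (β b) = φ b)) := by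
  classical
  have boolFT : ∀ t : Bool, t = false ∨ t = true := by decide
  set LF : C →ₗ[ℂ] ℂ :=
    { toFun := F, map_add' := hFadd, map_smul' := fun c x => by simpa using hFsmul c x }
    with hLFdef
  have hLF : ∀ x, LF x = F x := fun x => rfl
  have hFneg : ∀ x, F (-x) = -F x := fun x => by
    rw [← hLF, ← hLF, map_neg]
  have hωneg : ∀ u, ω (-u) = -ω u := fun u => by
    rw [← hω.lm_apply, map_neg, hω.lm_apply]
  have hφneg : ∀ u, φ (-u) = -φ u := fun u => by
    rw [← hφ.lm_apply, map_neg, hφ.lm_apply]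
  constructor
  · -- positivity implies one of the states is even
    intro hpos
    by_contra hcon
    push_neg at hcon
    obtain ⟨hωne, hφne⟩ := hcon
    obtain ⟨a₁, ha₁⟩ := hωne
    obtain ⟨b₁, hb₁⟩ := hφne
    set a₀ : A := a₁ - α a₁ with ha₀def
    set b₀ : B := b₁ - β b₁ with hb₀def
    have hαa₀ : α a₀ = -a₀ := by
      rw [ha₀def, map_sub, hα, neg_sub]
    have hβb₀ : β b₀ = -b₀ := by
      rw [hb₀def, map_sub, hβ, neg_sub]
    set w : ℂ := ω a₀ with hwdef
    set v : ℂ := φ b₀ with hvdef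
    have hw : w ≠ 0 := by
      rw [hwdef, ha₀def]
      intro h
      rw [← hω.lm_apply, map_sub, sub_eq_zero] at h
      exact ha₁ (by simpa using h.symm)
    have hv : v ≠ 0 := by
      rw [hvdef, hb₀def]
      intro h
      rw [← hφ.lm_apply, map_sub, sub_eq_zero] at h
      exact hb₁ (by simpa using h.symm)
    set c : ℂ := Complex.I * (starRingEnd ℂ) w * v with hcdef
    set a : A := c • a₀ with hadef
    have hαa : α a = -a := by rw [hadef, map_smul, hαa₀, smul_neg]
    have hβsb : β (star b₀) = -(star b₀) := by
      rw [map_star, hβb₀, star_neg]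
    set x : C := e (a ⊗ₜ[ℂ] (1 : B)) + e ((1 : A) ⊗ₜ[ℂ] b₀) with hxdef
    have hsx : star x = e (star a ⊗ₜ[ℂ] (1 : B)) + e ((1 : A) ⊗ₜ[ℂ] star b₀) := by
      rw [hxdef, star_add, hstar₁ a 1 (Or.inr (map_one β)),
        hstar₁ 1 b₀ (Or.inl (map_one α)), star_one, star_one]
    have hval : F (star x * x)
        = ω (star a * a) + ((starRingEnd ℂ) (ω a) * v - ω a * (starRingEnd ℂ) v)
          + φ (star b₀ * b₀) := by
      rw [hsx, hxdef, add_mul, mul_add, mul_add]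
      rw [hmul₁ (star a) a 1 1 (Or.inl (map_one β)),
        hmul₁ (star a) 1 1 b₀ (Or.inl (map_one β)),
        hmul₂ 1 a (star b₀) 1 hβsb hαa,
        hmul₁ 1 1 (star b₀) b₀ (Or.inr (map_one α))]
      rw [hFadd, hFadd, hFadd, hFneg]
      rw [hF, hF, hF, hF]
      rw [mul_one, one_mul, mul_one, one_mul, mul_one, one_mul]
      rw [hω.2.2.1, hφ.2.2.1, hω.star_eq, hφ.star_eq]
      ring
    have him : (F (star x * x)).im = 0 := by
      have h1 := hpos x
      rw [Complex.le_def] at h1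
      exact h1.2.symm
    have hza : ω a = c * w := by rw [hadef, hω.2.1, hwdef]
    set z : ℂ := ω a * (starRingEnd ℂ) v with hzdef
    have hzval : z = Complex.I * ((Complex.normSq w * Complex.normSq v : ℝ) : ℂ) := by
      rw [hzdef, hza, hcdef]
      have h1 : w * (starRingEnd ℂ) w = ((Complex.normSq w : ℝ) : ℂ) := Complex.mul_conj w
      have h2 : v * (starRingEnd ℂ) v = ((Complex.normSq v : ℝ) : ℂ) := Complex.mul_conj v
      push_cast
      rw [← h1, ← h2]
      ring
    have hconjz : (starRingEnd ℂ) (ω a) * v = (starRingEnd ℂ) z := by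
      rw [hzdef, map_mul, Complex.conj_conj]
    rw [hval, hconjz] at him
    have himz : z.im ≠ 0 := by
      have hr : (0:ℝ) < Complex.normSq w * Complex.normSq v :=
        mul_pos (Complex.normSq_pos.mpr hw) (Complex.normSq_pos.mpr hv)
      rw [hzval]
      simpa using hr.ne'
    have h1 := hω.im_zero a
    have h2 := hφ.im_zero b₀
    simp only [Complex.add_im, Complex.sub_im, Complex.conj_im, h1, h2] at him
    exact himz (by linarith)
  · -- evenness implies positivity
    intro heven x
    obtain ⟨n, a, b, ha, hb, ht⟩ := exists_hom_rep α hα β hβ (e.symm x)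
    have hx : x = ∑ i, e (a i ⊗ₜ[ℂ] b i) := by
      conv_lhs => rw [← e.apply_symm_apply x, ht]
      rw [map_sum]
    set pa : Fin n → Bool := fun i => ! decide (α (a i) = a i) with hpadef
    set pb : Fin n → Bool := fun i => ! decide (β (b i) = b i) with hpbdef
    have hpaF : ∀ i, pa i = false → α (a i) = a i := by
      intro i h
      rw [hpadef] at h
      simpa using h
    have hpaT : ∀ i, pa i = true → α (a i) = -(a i) := by
      intro i h
      rw [hpadef] at h
      simp only [Bool.not_eq_true', decide_eq_false_iff_not] at h
      rcases ha i with h' | h'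
      · exact absurd h' h
      · exact h'
    have hpbF : ∀ i, pb i = false → β (b i) = b i := by
      intro i h
      rw [hpbdef] at h
      simpa using h
    have hpbT : ∀ i, pb i = true → β (b i) = -(b i) := by
      intro i h
      rw [hpbdef] at h
      simp only [Bool.not_eq_true', decide_eq_false_iff_not] at h
      rcases hb i with h' | h'
      · exact absurd h' h
      · exact h'
    have master : ∀ i j, F (star (e (a i ⊗ₜ[ℂ] b i)) * e (a j ⊗ₜ[ℂ] b j))
        = (if pa i && pb i then (-1 : ℂ) else 1) * (if pb i && pa j then (-1 : ℂ) else 1)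
          * (ω (star (a i) * a j) * φ (star (b i) * b j)) := by
      intro i j
      rcases boolFT (pb i) with hqi | hqi
      · rw [hstar₁ _ _ (Or.inr (hpbF i hqi)),
          hmul₁ _ _ _ _ (Or.inl (by rw [map_star, hpbF i hqi])), hF]
        simp [hqi]
      · have hsb : β (star (b i)) = -(star (b i)) := by
          rw [map_star, hpbT i hqi, star_neg]
        rcases boolFT (pa i) with hpi | hpi <;>
          rcases boolFT (pa j) with hpj | hpj
        · rw [hstar₁ _ _ (Or.inl (hpaF i hpi)),
            hmul₁ _ _ _ _ (Or.inr (hpaF j hpj)), hF]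
          simp [hqi, hpi, hpj]
        · rw [hstar₁ _ _ (Or.inl (hpaF i hpi)),
            hmul₂ _ _ _ _ hsb (hpaT j hpj), hFneg, hF]
          simp only [hqi, hpi, hpj]
          norm_num
        · rw [hstar₂ _ _ (hpaT i hpi) (hpbT i hqi), neg_mul,
            hmul₁ _ _ _ _ (Or.inr (hpaF j hpj)), hFneg, hF]
          simp only [hqi, hpi, hpj]
          norm_num
        · rw [hstar₂ _ _ (hpaT i hpi) (hpbT i hqi), neg_mul,
            hmul₂ _ _ _ _ hsb (hpaT j hpj), neg_neg, hF]
          simp only [hqi, hpi, hpj]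
          norm_num
    have hexp : F (star x * x)
        = ∑ i, ∑ j, F (star (e (a i ⊗ₜ[ℂ] b i)) * e (a j ⊗ₜ[ℂ] b j)) := by
      rw [hx, star_sum, Finset.sum_mul_sum, ← hLF]
      rw [map_sum]
      refine Finset.sum_congr rfl fun i _ => ?_
      rw [map_sum]
      simp only [hLF]
    rcases heven with heω | heφ
    · -- ω is even
      have hωodd : ∀ u : A, α u = -u → ω u = 0 := by
        intro u hu
        have h1 : ω (-u) = ω u := by rw [← hu, heω]
        rw [hωneg] at h1
        linear_combination -h1 / 2
      have claim : ∀ i j, F (star (e (a i ⊗ₜ[ℂ] b i)) * e (a j ⊗ₜ[ℂ] b j))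
          = ω (star (a i) * a j) * φ (star (b i) * b j) := by
        intro i j
        rw [master i j]
        by_cases hij : pa i = pa j
        · have h2 : (pb i && pa j) = (pa i && pb i) := by rw [← hij, Bool.and_comm]
          rw [h2]
          by_cases h : (pa i && pb i) = true <;> simp [h] <;> ring
        · have hzero : ω (star (a i) * a j) = 0 := by
            apply hωodd
            rw [map_mul, map_star]
            rcases boolFT (pa i) with hpi | hpi <;>
              rcases boolFT (pa j) with hpj | hpj
            · exact absurd (hpi.trans hpj.symm) hij
            · rw [hpaF i hpi, hpaT j hpj, mul_neg]
            · rw [hpaT i hpi, hpaF j hpj, star_neg, neg_mul]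
            · exact absurd (hpi.trans hpj.symm) hij
          rw [hzero]
          ring
      rw [hexp]
      have hrw : (∑ i, ∑ j, F (star (e (a i ⊗ₜ[ℂ] b i)) * e (a j ⊗ₜ[ℂ] b j)))
          = ∑ i, ∑ j, ω (star (a i) * a j) * φ (star (b i) * b j) :=
        Finset.sum_congr rfl fun i _ => Finset.sum_congr rfl fun j _ => claim i j
      rw [hrw]
      exact gram_nonneg hω hφ a b
    · -- φ is even
      have hφodd : ∀ u : B, β u = -u → φ u = 0 := by
        intro u hu
        have h1 : φ (-u) = φ u := by rw [← hu, heφ]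
        rw [hφneg] at h1
        linear_combination -h1 / 2
      set cc : Fin n → A := fun i => if pa i && pb i then -(a i) else a i with hccdef
      have claim : ∀ i j, F (star (e (a i ⊗ₜ[ℂ] b i)) * e (a j ⊗ₜ[ℂ] b j))
          = ω (star (cc i) * cc j) * φ (star (b i) * b j) := by
        intro i j
        have hωcc : ω (star (cc i) * cc j)
            = (if pa i && pb i then (-1 : ℂ) else 1) * (if pa j && pb j then (-1 : ℂ) else 1)
              * ω (star (a i) * a j) := by
          by_cases h1 : pa i = true ∧ pb i = true <;> by_cases h2 : pa j = true ∧ pb j = true <;>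
            simp [hccdef, Bool.and_eq_true, h1, h2, star_neg, neg_mul, mul_neg, neg_neg,
              hωneg] <;> ring
        rw [master i j]
        by_cases hij : pb i = pb j
        · have h2 : (pb i && pa j) = (pa j && pb j) := by rw [hij, Bool.and_comm]
          rw [hωcc, h2]
          ring
        · have hzero : φ (star (b i) * b j) = 0 := by
            apply hφodd
            rw [map_mul, map_star]
            rcases boolFT (pb i) with hqi | hqi <;>
              rcases boolFT (pb j) with hqj | hqj
            · exact absurd (hqi.trans hqj.symm) hij
            · rw [hpbF i hqi, hpbT j hqj, mul_neg]
            · rw [hpbT i hqi, hpbF j hqj, star_neg, neg_mul]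
            · exact absurd (hqi.trans hqj.symm) hij
          rw [hzero]
          ring
      rw [hexp]
      have hrw : (∑ i, ∑ j, F (star (e (a i ⊗ₜ[ℂ] b i)) * e (a j ⊗ₜ[ℂ] b j)))
          = ∑ i, ∑ j, ω (star (cc i) * cc j) * φ (star (b i) * b j) :=
        Finset.sum_congr rfl fun i _ => Finset.sum_congr rfl fun j _ => claim i j
      rw [hrw]
      exact gram_nonneg hω hφ cc b
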